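/- Let m ≥ 1 and B be positive integers and a_1, …, a_{3m} be positive integers with B/4 < a_i < B/2 for all i and Σ_{i=1}^{3m} a_i = mB. If t is any schedule of the reduction tree T(a, B) (on any number of processors) whose peak memory is at most 3mB + 3m, then for every time step s at most three of the nodes N_1, …, N_{3m} satisfy t(N_i) = s. -/

import Mathlib

/-- A finite rooted in-tree: every node has a parent (the root is its own
parent), and a rank function witnesses that following parents strictly
decreases towards the root, so every node has a unique path to the root. -/
structure InTree where
  V : Type
  [fin : Fintype V]
  [deq : DecidableEq V]
  root : V
  parent : V → V
  parent_root : parent root = root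
  rk : V → ℕ
  rk_lt : ∀ v, v ≠ root → rk (parent v) < rk v
  rk_root : ∀ v, rk v = 0 → v = root

attribute [instance] InTree.fin InTree.deq

/-- A schedule of `T` on `p` processors: at most `p` tasks per unit time step,
and every non-root task finishes before its parent starts. -/
def InTree.IsSchedule (T : InTree) (p : ℕ) (t : T.V → ℕ) : Prop :=
  (∀ s : ℕ, (Finset.univ.filter (fun i => t i = s)).card ≤ p) ∧
  (∀ i : T.V, i ≠ T.root → t i + 1 ≤ t (T.parent i))

/-- Makespan of a schedule: `max_i (t i + 1)`. -/
def InTree.makespan (T : InTree) (t : T.V → ℕ) : ℕ :=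
  Finset.univ.sup (fun i => t i + 1)

/-- Memory used at step `s`: number of nodes `i` with `t i ≤ s` that are the
root or whose parent has not finished before step `s`. -/
def InTree.memAt (T : InTree) (t : T.V → ℕ) (s : ℕ) : ℕ :=
  (Finset.univ.filter (fun i : T.V => t i ≤ s ∧ (i = T.root ∨ s ≤ t (T.parent i)))).card

/-- Peak memory of a schedule: maximum memory usage over steps `0 ≤ s < makespan`. -/
def InTree.peakMemory (T : InTree) (t : T.V → ℕ) : ℕ :=
  (Finset.range (T.makespan t)).sup (T.memAt t)


/-- Node set of the 3-Partition reduction tree: a root, the nodes `N i`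
(`i < 3m`), and for each `i` the `3m * a i` leaf children of `N i`. -/
abbrev RedV (m : ℕ) (a : Fin (3*m) → ℕ) : Type :=
  Unit ⊕ Fin (3*m) ⊕ (Σ i : Fin (3*m), Fin (3*m * a i))

/-- The reduction tree `T(a, B)`: a root whose children are the `N i`,
each `N i` having exactly `3m * a i` leaf children. -/
def redTree (m : ℕ) (a : Fin (3*m) → ℕ) : InTree where
  V := RedV m a
  root := Sum.inl ()
  parent := fun v => match v with
    | Sum.inl _ => Sum.inl ()
    | Sum.inr (Sum.inl _) => Sum.inl ()
    | Sum.inr (Sum.inr ⟨i, _⟩) => Sum.inr (Sum.inl i)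
  parent_root := rfl
  rk := fun v => match v with
    | Sum.inl _ => 0
    | Sum.inr (Sum.inl _) => 1
    | Sum.inr (Sum.inr _) => 2
  rk_lt := by rintro (u | i | ⟨i, j⟩) h
              · cases u; exact absurd rfl h
              · simp
              · simp
  rk_root := by rintro (u | i | s) h
                · cases u; rfl
                · simp at h
                · simp at h

/-- The node `N i` of the reduction tree. -/
def Nnode (m : ℕ) (a : Fin (3*m) → ℕ) (i : Fin (3*m)) : (redTree m a).V :=
  Sum.inr (Sum.inl i)

/-- For any schedule of the reduction tree `T(a, B)` (on any number of
processors) whose peak memory is at most `3mB + 3m`, at most three of the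
nodes `N i` are processed at any given time step. -/
theorem stmt3 (m B : ℕ) (hm : 1 ≤ m) (hB : 1 ≤ B) (a : Fin (3*m) → ℕ)
    (ha : ∀ i, B < 4 * a i ∧ 2 * a i < B) (hsum : ∑ i, a i = m * B)
    (p : ℕ) (t : (redTree m a).V → ℕ) (ht : (redTree m a).IsSchedule p t)
    (hmem : (redTree m a).peakMemory t ≤ 3*m*B + 3*m) :
    ∀ s : ℕ, (Finset.univ.filter (fun i : Fin (3*m) => t (Nnode m a i) = s)).card ≤ 3 := by
  intro s
  by_contra hcon
  push_neg at hcon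
  obtain ⟨S, hS, hScard⟩ := Finset.exists_subset_card_eq (n := 4) hcon
  have hts : ∀ i ∈ S, t (Nnode m a i) = s := by
    intro i hi
    have := hS hi
    simpa using this
  obtain ⟨i0, hi0⟩ := Finset.card_pos.mp (by omega : 0 < S.card)
  have hms : s < (redTree m a).makespan t := by
    have h1 : t (Nnode m a i0) + 1 ≤ (redTree m a).makespan t :=
      Finset.le_sup (f := fun i => t i + 1) (Finset.mem_univ (Nnode m a i0))
    have h2 := hts i0 hi0
    omega
  have hpeak : (redTree m a).memAt t s ≤ 3*m*B + 3*m :=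
    le_trans (Finset.le_sup (Finset.mem_range.mpr hms)) hmem
  set F := Finset.univ.filter (fun i : (redTree m a).V =>
      t i ≤ s ∧ (i = (redTree m a).root ∨ s ≤ t ((redTree m a).parent i))) with hF
  have hFcard : (redTree m a).memAt t s = F.card := rfl
  -- Node N i for i ∈ S is counted
  have hNmem : ∀ i ∈ S, Nnode m a i ∈ F := by
    intro i hi
    rw [hF, Finset.mem_filter]
    refine ⟨Finset.mem_univ _, le_of_eq (hts i hi), Or.inr ?_⟩
    have hne : Nnode m a i ≠ (redTree m a).root := by
      simp [Nnode, redTree]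
    have := ht.2 (Nnode m a i) hne
    have h2 := hts i hi
    omega
  -- Leaves of N i for i ∈ S are counted
  have hLmem : ∀ i ∈ S, ∀ j : Fin (3*m * a i),
      (Sum.inr (Sum.inr ⟨i, j⟩) : (redTree m a).V) ∈ F := by
    intro i hi j
    rw [hF]
    erw [Finset.mem_filter (p := fun i : (redTree m a).V =>
      t i ≤ s ∧ (i = (redTree m a).root ∨ s ≤ t ((redTree m a).parent i)))]
    have hne : (Sum.inr (Sum.inr ⟨i, j⟩) : (redTree m a).V) ≠ (redTree m a).root := by
      simp [redTree]
    have hpar : (redTree m a).parent (Sum.inr (Sum.inr ⟨i, j⟩)) = Nnode m a i := rfl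
    have h1 := ht.2 (Sum.inr (Sum.inr ⟨i, j⟩)) hne
    rw [hpar] at h1
    have h2 := hts i hi
    exact ⟨Finset.mem_univ _, by omega, Or.inr (by rw [hpar]; omega)⟩
  -- the two subsets
  set A1 : Finset (redTree m a).V := S.image (Nnode m a) with hA1
  set A2 : Finset (redTree m a).V :=
    (S.sigma (fun i => (Finset.univ : Finset (Fin (3*m * a i))))).image
      (fun x => (Sum.inr (Sum.inr x) : (redTree m a).V)) with hA2
  have hA1card : A1.card = 4 := by
    rw [hA1, Finset.card_image_of_injective _ (fun x y h => by
      exact Sum.inl_injective (Sum.inr_injective h)), hScard]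
  have hA2card : A2.card = ∑ i ∈ S, 3*m * a i := by
    rw [hA2]
    refine (Finset.card_image_of_injective _ (fun x y h => by
      exact Sum.inr_injective (Sum.inr_injective h))).trans ?_
    rw [Finset.card_sigma]
    simp
  have hdisj : Disjoint A1 A2 := by
    rw [Finset.disjoint_left]
    intro x hx1 hx2
    rw [hA1, Finset.mem_image] at hx1
    rw [hA2] at hx2
    replace hx2 := Finset.mem_image.mp hx2
    obtain ⟨i, _, rfl⟩ := hx1
    obtain ⟨y, _, hy⟩ := hx2
    simp [Nnode] at hy
    injection hy with hy
    cases hy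
  have hsub : A1 ∪ A2 ⊆ F := by
    intro x hx
    rcases Finset.mem_union.mp hx with hx | hx
    · obtain ⟨i, hi, rfl⟩ := Finset.mem_image.mp hx
      exact hNmem i hi
    · obtain ⟨⟨i, j⟩, hy, rfl⟩ := Finset.mem_image.mp hx
      exact hLmem i (Finset.mem_sigma.mp hy).1 j
  have hcardF : 4 + ∑ i ∈ S, 3*m * a i ≤ F.card := by
    calc 4 + ∑ i ∈ S, 3*m * a i = (A1 ∪ A2).card := by
          rw [Finset.card_union_of_disjoint hdisj, hA1card, hA2card]
      _ ≤ F.card := Finset.card_le_card hsub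
  have hsumS : B + 1 ≤ ∑ i ∈ S, a i := by
    have h4 : ∀ i ∈ S, B + 1 ≤ 4 * a i := fun i _ => (ha i).1
    have h5 : ∑ i ∈ S, (B + 1) ≤ ∑ i ∈ S, 4 * a i := Finset.sum_le_sum h4
    rw [Finset.sum_const, hScard, ← Finset.mul_sum, smul_eq_mul] at h5
    omega
  have hsum2 : ∑ i ∈ S, 3*m * a i = 3*m * ∑ i ∈ S, a i := by
    rw [Finset.mul_sum]
  have hkey : 3*m*B + 3*m ≤ 3*m * ∑ i ∈ S, a i := by
    have h1 : 3*m * (B+1) ≤ 3*m * ∑ i ∈ S, a i := Nat.mul_le_mul_left _ hsumS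
    have h2 : 3*m * (B+1) = 3*m*B + 3*m := by ring
    omega
  rw [hFcard] at hpeak
  omega
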